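/- Let P be a partial monoid and let w be a word over P∖{1_P} that is not irreducible, with left-standard decomposition lstd(w) = (u,x,y,v). If x × y = 1_P, then u is the empty word; in particular the maximal irreducible prefix of w is the one-letter word x, and the set of irreducible prefixes of w is exactly {ε, x}. -/

import Mathlib

/-- A partial monoid: a type `P` with a partial multiplication (encoded as a total
function `mul` together with a domain predicate `dom`; the value of `mul` is only
meaningful on `dom`) and a total identity `one`. -/
structure PartialMonoid (P : Type*) where
  dom : P → P → Prop
  mul : P → P → P
  one : P
  dom_one_right : ∀ x, dom x one
  dom_one_left : ∀ x, dom one x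
  mul_one : ∀ x, mul x one = x
  one_mul : ∀ x, mul one x = x
  dom_assoc : ∀ x y z, (dom x y ∧ dom (mul x y) z) ↔ (dom y z ∧ dom x (mul y z))
  mul_assoc : ∀ x y z, dom x y → dom (mul x y) z → mul (mul x y) z = mul x (mul y z)

/-- One-step reduction `⇒_R` of the semi-Thue system `R_P` associated with the
partial monoid `P`: contract a composable factor `x·y` to `x×y`, or erase a
letter `1_P`. -/
inductive Red {P : Type*} (M : PartialMonoid P) : List P → List P → Prop
  | mul (u v : List P) (x y : P) (h : M.dom x y) :
      Red M (u ++ x :: y :: v) (u ++ M.mul x y :: v)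
  | one (u v : List P) : Red M (u ++ M.one :: v) (u ++ v)

/-- A word is irreducible (a normal form) if no one-step reduction applies to it. -/
def Irr {P : Type*} (M : PartialMonoid P) (w : List P) : Prop :=
  ¬ ∃ w', Red M w w'

/-- Confluence of a relation. -/
def Confluent {α : Type*} (r : α → α → Prop) : Prop :=
  ∀ a b c, Relation.ReflTransGen r a b → Relation.ReflTransGen r a c →
    ∃ d, Relation.ReflTransGen r b d ∧ Relation.ReflTransGen r c d

/-- Let `w` be a non-irreducible word over `P∖{1_P}` with left-standard decomposition
`lstd(w) = (u,x,y,v)`, i.e. `w = u·x·y·v`, `(x,y) ∈ dom(×)`, and `(x,y)` is the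
leftmost composable pair of consecutive letters (no two consecutive letters of `u·x`
are composable). If `x×y = 1_P` then `u = ε`; in particular the maximal irreducible
prefix of `w` is the one-letter word `x` and the set of irreducible prefixes of `w`
is exactly `{ε, x}`. -/

lemma red_shape {P : Type*} (M : PartialMonoid P) {l l' : List P} (h : Red M l l') :
    (∃ u v x y, M.dom x y ∧ l = u ++ x :: y :: v) ∨ (∃ u v, l = u ++ M.one :: v) := by
  cases h with
  | mul u v x y hd => exact Or.inl ⟨u, v, x, y, hd, rfl⟩
  | one u v => exact Or.inr ⟨u, v, rfl⟩

lemma irr_nil {P : Type*} (M : PartialMonoid P) : Irr M [] := by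
  rintro ⟨w', h⟩
  rcases red_shape M h with ⟨u, v, x, y, hd, he⟩ | ⟨u, v, he⟩ <;> simp at he

lemma irr_singleton {P : Type*} (M : PartialMonoid P) (a : P) (ha : a ≠ M.one) :
    Irr M [a] := by
  rintro ⟨w', h⟩
  rcases red_shape M h with ⟨u, v, x, y, hd, he⟩ | ⟨u, v, he⟩ <;> cases u <;> simp_all

theorem lstd_of_mul_eq_one {P : Type*} (M : PartialMonoid P)
    (w u v : List P) (x y : P)
    (hw : ∀ a ∈ w, a ≠ M.one) (hnirr : ¬ Irr M w)
    (hdec : w = u ++ x :: y :: v) (hdom : M.dom x y)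
    (hleft : List.Chain' (fun a b => ¬ M.dom a b) (u ++ [x]))
    (hone : M.mul x y = M.one) :
    u = [] ∧
    ([x] <+: w ∧ Irr M [x] ∧ ∀ p : List P, p <+: w → Irr M p → p <+: [x]) ∧
    (∀ p : List P, (p <+: w ∧ Irr M p) ↔ (p = [] ∨ p = [x])) := by
  have hu : u = [] := by
    rcases List.eq_nil_or_concat u with h | ⟨u', a, rfl⟩
    · exact h
    · exfalso
      have hax : M.dom a x :=
        (((M.dom_assoc a x y).mpr ⟨hdom, hone ▸ M.dom_one_right a⟩)).1
      have hnd : ¬ M.dom a x := by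
        have h2 := hleft
        simp [List.Chain', List.isChain_append] at h2
        tauto
      exact hnd hax
  subst hu
  simp only [List.nil_append] at hdec
  subst hdec
  have hx : x ≠ M.one := hw x (by simp)
  have hirrx : Irr M [x] := irr_singleton M x hx
  have hpre : ∀ p : List P, p <+: x :: y :: v → Irr M p → p <+: [x] := by
    intro p hp hip
    obtain ⟨t, ht⟩ := hp
    match p with
    | [] => exact List.nil_prefix
    | [b] =>
      simp only [List.cons_append, List.nil_append, List.cons.injEq] at ht
      rw [ht.1]
    | b :: c :: q =>
      exfalso
      simp only [List.cons_append, List.cons.injEq] at ht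
      obtain ⟨rfl, rfl, -⟩ := ht
      exact hip ⟨_, Red.mul [] q _ _ hdom⟩
  refine ⟨rfl, ⟨⟨y :: v, rfl⟩, hirrx, hpre⟩, ?_⟩
  intro p
  constructor
  · rintro ⟨hp, hip⟩
    obtain ⟨t, ht⟩ := hpre p hp hip
    match p, t, ht with
    | [], _, _ => exact Or.inl rfl
    | [b], [], ht =>
      simp only [List.cons_append, List.nil_append, List.cons.injEq] at ht
      exact Or.inr (by rw [ht.1])
  · rintro (rfl | rfl)
    · exact ⟨List.nil_prefix, irr_nil M⟩
    · exact ⟨⟨y :: v, rfl⟩, hirrx⟩
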